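/- In a free group, no nontrivial element is conjugate to its own inverse: if g * a * g⁻¹ = a⁻¹ then a = 1. -/

import Mathlib

namespace Stmt8Aux

open FreeGroup List

variable {α : Type*} [DecidableEq α]

/-- The "no cancellation" relation on letters: `q` is not the inverse of `p`. -/
def R (p q : α × Bool) : Prop := q ≠ (p.1, !p.2)

lemma R_swap {p q : α × Bool} (h : R p q) : R (q.1, !q.2) (p.1, !p.2) := by
  simp only [R, ne_eq, Bool.not_not] at *
  exact fun hq => h hq.symm

lemma invRev_append (L₁ L₂ : List (α × Bool)) :
    invRev (L₁ ++ L₂) = invRev L₂ ++ invRev L₁ := by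
  simp [invRev]

lemma invRev_singleton (p : α × Bool) : invRev [p] = [(p.1, !p.2)] := by
  simp [invRev]

lemma chain'_invRev {L : List (α × Bool)} (h : List.Chain' R L) :
    List.Chain' R (invRev L) := by
  show List.IsChain R (List.reverse _)
  rw [List.isChain_reverse, List.isChain_map]
  exact (show List.IsChain R L from h).imp fun a b hab => R_swap hab

lemma reduce_eq_self {L : List (α × Bool)} (h : List.Chain' R L) : reduce L = L := by
  induction L with
  | nil => rfl
  | cons x t ih =>
    rw [reduce.cons, ih h.tail]
    cases t with
    | nil => rfl
    | cons y s =>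
      have hxy : R x y := (List.isChain_cons_cons.mp h).1
      show (if x.1 = y.1 ∧ x.2 = !y.2 then s else x :: y :: s) = x :: y :: s
      rw [if_neg]
      rintro ⟨h1, h2⟩
      apply hxy
      have : y.2 = !x.2 := by rw [h2, Bool.not_not]
      exact Prod.ext h1.symm this

lemma chain'_or_split (L : List (α × Bool)) :
    List.Chain' R L ∨ ∃ (L₁ : List (α × Bool)) (p : α × Bool) (L₂ : List (α × Bool)), L = L₁ ++ p :: (p.1, !p.2) :: L₂ := by
  induction L with
  | nil => exact Or.inl List.isChain_nil
  | cons x t ih =>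
    cases t with
    | nil => exact Or.inl (List.isChain_singleton x)
    | cons y s =>
      by_cases hxy : R x y
      · rcases ih with hc | ⟨L₁, p, L₂, hsplit⟩
        · exact Or.inl (List.isChain_cons_cons.mpr ⟨hxy, hc⟩)
        · exact Or.inr ⟨x :: L₁, p, L₂, by rw [hsplit]; rfl⟩
      · refine Or.inr ⟨[], x, s, ?_⟩
        simp only [R, ne_eq, not_not] at hxy
        rw [← hxy]
        rfl

lemma chain'_toWord (x : FreeGroup α) : List.Chain' R x.toWord := by
  rcases chain'_or_split x.toWord with h | ⟨L₁, p, L₂, hsplit⟩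
  · exact h
  · exfalso
    have hred : reduce x.toWord = x.toWord := reduce_toWord x
    have hstep : Red.Step x.toWord (L₁ ++ L₂) := by
      rw [hsplit]; exact Red.Step.not
    have h1 : reduce x.toWord = reduce (L₁ ++ L₂) := reduce.Step.eq hstep
    have h2 : (reduce (L₁ ++ L₂)).length ≤ (L₁ ++ L₂).length :=
      Red.length_le reduce.red
    rw [hred, hsplit] at h1
    have := congrArg List.length h1
    simp only [List.length_append, List.length_cons] at this h2
    omega

lemma toWord_mk' {L : List (α × Bool)} (h : List.Chain' R L) :
    (mk L).toWord = L := by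
  rw [toWord_mk, reduce_eq_self h]

lemma mk_singleton_inv (p : α × Bool) :
    mk [p] * mk [(p.1, !p.2)] = (1 : FreeGroup α) := by
  rw [← invRev_singleton, ← inv_mk, mul_inv_cancel]

/-- A reduced palindromic word (equal to its own formal inverse) is empty. -/
lemma palindrome : ∀ (n : ℕ) (L : List (α × Bool)), L.length = n →
    List.Chain' R L → invRev L = L → L = [] := by
  intro n
  induction n using Nat.strong_induction_on with
  | _ n ih =>
    intro L hlen hc h
    cases L with
    | nil => rfl
    | cons p T =>
      rcases T.eq_nil_or_concat' with rfl | ⟨M, q, rfl⟩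
      · exfalso
        rw [invRev_singleton] at h
        simp [Prod.ext_iff] at h
      · exfalso
        have hrw : invRev (p :: (M ++ [q]))
            = (q.1, !q.2) :: (invRev M ++ [(p.1, !p.2)]) := by
          have : p :: (M ++ [q]) = [p] ++ (M ++ [q]) := rfl
          rw [this, invRev_append, invRev_append, invRev_singleton, invRev_singleton]
          simp
        rw [hrw] at h
        have h1 : (q.1, !q.2) = p := (List.cons.injEq _ _ _ _).mp h |>.1
        have h2 : invRev M ++ [(p.1, !p.2)] = M ++ [q] :=
          (List.cons.injEq _ _ _ _).mp h |>.2
        have hlenM : (invRev M).length = M.length := invRev_length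
        obtain ⟨hM, _⟩ := List.append_inj h2 hlenM
        have hMchain : List.Chain' R M :=
          hc.infix ⟨[p], [q], by simp⟩
        have hMlen : M.length < n := by
          simp only [List.length_cons, List.length_append, List.length_singleton] at hlen
          omega
        have hMnil : M = [] := ih M.length hMlen M rfl hMchain hM
        subst hMnil
        -- L = [p, q] with p = (q.1, !q.2); chain gives R p q
        have hRpq : R p q := (List.isChain_cons_cons.mp hc).1
        apply hRpq
        rw [← h1]
        simp [Bool.not_not]

/-- Cyclically reduced words. -/
def Cyc (L : List (α × Bool)) : Prop := List.Chain' R (L ++ L)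

lemma Cyc.chain' {L : List (α × Bool)} (h : Cyc L) : List.Chain' R L :=
  List.IsChain.left_of_append h

lemma Cyc.rotate {L : List (α × Bool)} (h : Cyc L) (n : ℕ) : Cyc (L.rotate n) := by
  rcases eq_or_ne L [] with rfl | hL
  · simpa using h
  · rw [← List.rotate_mod]
    have hn : n % L.length ≤ L.length :=
      (Nat.mod_lt _ (List.length_pos_iff.mpr hL)).le
    rw [List.rotate_eq_drop_append_take hn]
    have h3 : List.Chain' R (L ++ L ++ L) := by
      apply List.isChain_append.mpr
      refine ⟨h, h.chain', ?_⟩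
      intro x hx y hy
      have hj := (List.isChain_append.mp h).2.2
      apply hj x _ y hy
      rwa [List.getLast?_append_of_ne_nil _ hL] at hx
    apply h3.infix
    refine ⟨L.take (n % L.length), L.drop (n % L.length), ?_⟩
    conv_rhs => rw [← List.take_append_drop (n % L.length) L]
    simp only [List.append_assoc]

lemma Cyc.of_isRotated {L L' : List (α × Bool)} (h : Cyc L) (h' : L ~r L') :
    Cyc L' := by
  obtain ⟨n, rfl⟩ := h'
  exact h.rotate n

lemma Cyc.invRev {L : List (α × Bool)} (h : Cyc L) : Cyc (FreeGroup.invRev L) := by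
  have heq : FreeGroup.invRev L ++ FreeGroup.invRev L = FreeGroup.invRev (L ++ L) :=
    (invRev_append L L).symm
  rw [Cyc, heq]
  exact chain'_invRev h

/-- Key lemma: if a conjugate of the cyclically reduced word `C` is the cyclically
reduced word `D`, then `D` is a rotation of `C`. -/
lemma key : ∀ (G C D : List (α × Bool)), List.Chain' R G → Cyc C → Cyc D → C ≠ [] →
    mk G * mk C * (mk G)⁻¹ = mk D → C ~r D := by
  intro G
  induction G using List.reverseRecOn with
  | nil =>
    intro C D _ hC hD _ h
    have h1 : mk C = mk D := by
      have hone : mk ([] : List (α × Bool)) = (1 : FreeGroup α) := rfl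
      rw [hone] at h
      simpa using h
    have h2 : C = D := by
      have := congrArg toWord h1
      rwa [toWord_mk' hC.chain', toWord_mk' hD.chain'] at this
    rw [h2]
  | append_singleton G' x ih =>
    intro C D hG hC hD hCne h
    have hG' : List.Chain' R G' := hG.infix ⟨[], [x], by simp⟩
    have h' : mk G' * (mk [x] * mk C * (mk [x])⁻¹) * (mk G')⁻¹ = mk D := by
      rw [← h, ← mul_mk]
      group
    by_cases ha : C.head? = some (x.1, !x.2)
    · -- the first letter of C cancels with x
      obtain ⟨c, T, rfl⟩ := List.exists_cons_of_ne_nil hCne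
      have hc : c = (x.1, !x.2) := by simpa using ha
      subst hc
      have step : mk [x] * mk ((x.1, !x.2) :: T) * (mk [x])⁻¹
          = mk (T ++ [(x.1, !x.2)]) := by
        have : ((x.1, !x.2) :: T) = [(x.1, !x.2)] ++ T := rfl
        rw [this, ← mul_mk, inv_mk, invRev_singleton, ← mul_assoc, mk_singleton_inv,
          one_mul, mul_mk]
      have hrot : ((x.1, !x.2) :: T) ~r (T ++ [(x.1, !x.2)]) :=
        List.isRotated_append (l := [(x.1, !x.2)]) (l' := T)
      have hC₁ : Cyc (T ++ [(x.1, !x.2)]) := hC.of_isRotated hrot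
      have hC₁ne : T ++ [(x.1, !x.2)] ≠ [] := by simp
      have h'' : mk G' * mk (T ++ [(x.1, !x.2)]) * (mk G')⁻¹ = mk D := by
        rw [← step]; exact h'
      exact hrot.trans (ih (T ++ [(x.1, !x.2)]) D hG' hC₁ hD hC₁ne h'')
    · by_cases hb : C.getLast? = some x
      · -- the last letter of C cancels with x⁻¹
        obtain ⟨M, q, rfl⟩ := C.eq_nil_or_concat'.resolve_left hCne
        have hq : x = q := by
          rw [List.getLast?_concat] at hb
          exact (Option.some_injective _ hb).symm
        subst hq
        have step : mk [x] * mk (M ++ [x]) * (mk [x])⁻¹ = mk (x :: M) := by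
          rw [inv_mk, invRev_singleton, ← mul_mk (L₁ := M) (L₂ := [x]), mul_assoc,
            mul_assoc, mk_singleton_inv, mul_one, mul_mk]
          rfl
        have hrot : (M ++ [x]) ~r (x :: M) :=
          List.isRotated_append (l := M) (l' := [x])
        have hC₁ : Cyc (x :: M) := hC.of_isRotated hrot
        have hC₁ne : (x :: M) ≠ [] := by simp
        have h'' : mk G' * mk (x :: M) * (mk G')⁻¹ = mk D := by
          rw [← step]; exact h'
        exact hrot.trans (ih (x :: M) D hG' hC₁ hD hC₁ne h'')
      · -- no cancellation at all: the conjugate is reduced but not cyclically reduced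
        exfalso
        set G := G' ++ [x] with hGdef
        have hGne : G ≠ [] := by simp [hGdef]
        have hinvG : FreeGroup.invRev G ≠ [] := by
          intro hnil
          have := congrArg List.length hnil
          rw [invRev_length] at this
          simp [hGdef] at this
        have hWchain : List.Chain' R (G ++ C ++ FreeGroup.invRev G) := by
          apply List.isChain_append.mpr
          refine ⟨?_, chain'_invRev hG, ?_⟩
          · apply List.isChain_append.mpr
            refine ⟨hG, hC.chain', ?_⟩
            intro u hu v hv
            have hu' : x = u := by
              rw [hGdef, List.getLast?_concat] at hu
              simpa using hu
            subst hu'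
            intro hveq
            apply ha
            rw [hveq] at hv
            simpa using hv
          · intro u hu v hv
            have hv' : v = (x.1, !x.2) := by
              have : FreeGroup.invRev G = (x.1, !x.2) :: FreeGroup.invRev G' := by
                rw [hGdef, invRev_append, invRev_singleton]
                rfl
              rw [this] at hv
              have h2 : (x.1, !x.2) = v := by simpa using hv
              exact h2.symm
            subst hv'
            rw [List.getLast?_append_of_ne_nil _ hCne] at hu
            intro hueq
            -- hueq : (x.1, !x.2) = (u.1, !u.2), so u = x
            apply hb
            have hux : u = x := by
              have h1 : x.1 = u.1 := (Prod.ext_iff.mp hueq).1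
              have h2 : (!x.2) = (!u.2) := (Prod.ext_iff.mp hueq).2
              have h2' : x.2 = u.2 := Bool.not_inj h2
              exact (Prod.ext h1 h2').symm
            rw [← hux]
            simpa using hu
        have hWD : G ++ C ++ FreeGroup.invRev G = D := by
          have hmk : mk (G ++ C ++ FreeGroup.invRev G) = mk D := by
            rw [← mul_mk, ← mul_mk, ← inv_mk]
            exact h
          have := congrArg toWord hmk
          rwa [toWord_mk' hWchain, toWord_mk' hD.chain'] at this
        obtain ⟨g₀, G₂, hG0⟩ := List.exists_cons_of_ne_nil hGne
        have hhead : D.head? = some g₀ := by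
          rw [← hWD, hG0]
          simp
        have hlast : D.getLast? = some (g₀.1, !g₀.2) := by
          rw [← hWD, List.getLast?_append_of_ne_nil _ hinvG]
          have : FreeGroup.invRev G = FreeGroup.invRev G₂ ++ [(g₀.1, !g₀.2)] := by
            rw [hG0]
            have : g₀ :: G₂ = [g₀] ++ G₂ := rfl
            rw [this, invRev_append, invRev_singleton]
          rw [this, List.getLast?_concat]
        have hj := (List.isChain_append.mp hD).2.2 (g₀.1, !g₀.2)
          (by rw [hlast]; rfl) g₀ (by rw [hhead]; rfl)
        apply hj
        simp [Bool.not_not]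

lemma main_cyc (a g : FreeGroup α) (hcyc : Cyc a.toWord)
    (h : g * a * g⁻¹ = a⁻¹) : a = 1 := by
  by_contra hne
  have hA : a.toWord ≠ [] := fun hnil => hne (toWord_eq_nil_iff.mp hnil)
  have hD : Cyc (FreeGroup.invRev a.toWord) := hcyc.invRev
  have hmk : mk g.toWord * mk a.toWord * (mk g.toWord)⁻¹
      = mk (FreeGroup.invRev a.toWord) := by
    rw [← inv_mk, mk_toWord, mk_toWord]
    exact h
  have hrot := key g.toWord a.toWord (FreeGroup.invRev a.toWord)
    (chain'_toWord g) hcyc hD hA hmk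
  obtain ⟨k, hk⟩ := hrot
  set A := a.toWord with hAdef
  set m := k % A.length with hm
  have hmle : m ≤ A.length := (Nat.mod_lt _ (List.length_pos_iff.mpr hA)).le
  have hk' : A.drop m ++ A.take m = FreeGroup.invRev A := by
    rw [← List.rotate_eq_drop_append_take hmle, hm, List.rotate_mod]
    exact hk
  have hinv : FreeGroup.invRev A
      = FreeGroup.invRev (A.drop m) ++ FreeGroup.invRev (A.take m) := by
    conv_lhs => rw [← List.take_append_drop m A]
    rw [invRev_append]
  have heq : A.drop m ++ A.take m
      = FreeGroup.invRev (A.drop m) ++ FreeGroup.invRev (A.take m) :=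
    hk'.trans hinv
  have hlen : (A.drop m).length = (FreeGroup.invRev (A.drop m)).length :=
    invRev_length.symm
  obtain ⟨h1, h2⟩ := List.append_inj heq hlen
  have hchA : List.Chain' R A := chain'_toWord a
  have hcd : List.Chain' R (A.drop m) :=
    hchA.infix ⟨A.take m, [], by simp⟩
  have hct : List.Chain' R (A.take m) :=
    hchA.infix ⟨[], A.drop m, by simp⟩
  have hd0 : A.drop m = [] := palindrome _ _ rfl hcd h1.symm
  have ht0 : A.take m = [] := palindrome _ _ rfl hct h2.symm
  apply hA
  rw [← List.take_append_drop m A, hd0, ht0]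
  rfl

lemma main (a g : FreeGroup α) (h : g * a * g⁻¹ = a⁻¹) : a = 1 := by
  suffices H : ∀ (n : ℕ) (a g : FreeGroup α), a.toWord.length = n →
      g * a * g⁻¹ = a⁻¹ → a = 1 from H _ a g rfl h
  intro n
  induction n using Nat.strong_induction_on with
  | _ n ih =>
    intro a g hn h
    rcases hA : a.toWord with _ | ⟨p, T⟩
    · exact toWord_eq_nil_iff.mp hA
    · rcases T.eq_nil_or_concat' with rfl | ⟨M, q, rfl⟩
      · -- single letter: cyclically reduced
        apply main_cyc a g ?_ h
        rw [hA]
        show List.Chain' R [p, p]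
        refine List.isChain_cons_cons.mpr ⟨?_, List.isChain_singleton p⟩
        simp [R, Prod.ext_iff]
      · by_cases hq : q = (p.1, !p.2)
        · -- a is not cyclically reduced: peel the outer conjugating letter
          subst hq
          have haw : a = mk [p] * mk M * (mk [p])⁻¹ := by
            rw [inv_mk, invRev_singleton, mul_mk, mul_mk, ← mk_toWord (x := a), hA]
            rfl
          have hM : List.Chain' R M :=
            (chain'_toWord a).infix ⟨[p], [(p.1, !p.2)], by rw [hA]; simp⟩
          have hMword : (mk M).toWord = M := toWord_mk' hM
          have hconj : ((mk [p])⁻¹ * g * mk [p]) * mk M * ((mk [p])⁻¹ * g * mk [p])⁻¹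
              = (mk M)⁻¹ := by
            rw [haw] at h
            calc ((mk [p])⁻¹ * g * mk [p]) * mk M * ((mk [p])⁻¹ * g * mk [p])⁻¹
                = (mk [p])⁻¹ * (g * (mk [p] * mk M * (mk [p])⁻¹) * g⁻¹) * mk [p] := by
                  group
              _ = (mk [p])⁻¹ * (mk [p] * mk M * (mk [p])⁻¹)⁻¹ * mk [p] := by rw [h]
              _ = (mk M)⁻¹ := by group
          have hlen : M.length < n := by
            rw [← hn, hA]
            simp
          have hb : mk M = 1 := by
            apply ih M.length hlen (mk M) ((mk [p])⁻¹ * g * mk [p]) _ hconj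
            rw [hMword]
          rw [haw, hb, mul_one, mul_inv_cancel]
        · -- a is cyclically reduced
          apply main_cyc a g ?_ h
          rw [hA]
          show List.Chain' R ((p :: (M ++ [(q)])) ++ (p :: (M ++ [q])))
          apply List.isChain_append.mpr
          have hch : List.Chain' R (p :: (M ++ [q])) := by
            rw [← hA]; exact chain'_toWord a
          refine ⟨hch, hch, ?_⟩
          intro u hu v hv
          have hu' : q = u := by
            have : p :: (M ++ [q]) = (p :: M) ++ [q] := by simp
            rw [this, List.getLast?_concat] at hu
            simpa using hu
          have hv' : p = v := by simpa using hv
          subst hu'; subst hv'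
          intro hpq
          apply hq
          rw [hpq]
          simp [Bool.not_not]

end Stmt8Aux

theorem stmt_8 {α : Type*} (a g : FreeGroup α) (h : g * a * g⁻¹ = a⁻¹) : a = 1 := by
  letI := Classical.decEq α
  exact Stmt8Aux.main a g h
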